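/- Let P be a b₀×b₁ probability matrix with positive entries and suppose λ₀, λ₁ ≤ 1 ≤ λ₀+λ₁ are P-sub-conjugate. Consider a bucketing code given by T pairs (B_{0,t}, B_{1,t}) of subsets of the row and column alphabets, with success probability S = p_{∪_t B_{0,t}×B_{1,t}} and work W = ∑_t max(n₀·p_{B_{0,t}*}, n₁·p_{*B_{1,t}}, n₀·p_{B_{0,t}*}·n₁·p_{*B_{1,t}}) for given positive reals n₀, n₁. Then W ≥ S·n₀^{λ₀}·n₁^{λ₁}. -/

import Mathlib

open Finset

/-- `λ₀, λ₁` are `P`-sub-conjugate. -/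
def SubConjugate {α β : Type*} [Fintype α] [Fintype β]
    (P : α → β → ℝ) (lam0 lam1 : ℝ) : Prop :=
  ∀ Q : α → β → ℝ, (∀ j k, 0 ≤ Q j k) → (∑ j, ∑ k, Q j k = 1) →
    lam0 * (∑ j, (∑ k, Q j k) * Real.log ((∑ k, Q j k) / (∑ k, P j k))) +
      lam1 * (∑ k, (∑ j, Q j k) * Real.log ((∑ j, Q j k) / (∑ j, P j k))) ≤
    ∑ j, ∑ k, Q j k * Real.log (Q j k / P j k)


lemma aux_log (q r : ℝ) (hq : 0 ≤ q) (hr : 0 < r) : q - r ≤ q * Real.log (q / r) := by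
  rcases eq_or_lt_of_le hq with h | h
  · simp [← h]; linarith
  · have h1 := Real.log_le_sub_one_of_pos (show (0:ℝ) < r / q by positivity)
    have h2 : Real.log (q / r) = - Real.log (r / q) := by
      rw [← Real.log_inv]; congr 1; rw [inv_div]
    rw [h2]
    have : r / q - 1 = (r - q) / q := by field_simp
    rw [this] at h1
    have h3 : q * (-Real.log (r/q)) ≥ q * (-((r - q)/q)) := by
      apply mul_le_mul_of_nonneg_left (by linarith) hq
    have h4 : q * (-((r - q)/q)) = q - r := by field_simp; ring
    linarith

lemma aux_max {lam0 lam1 x y : ℝ} (h0 : 0 ≤ lam0) (h0' : lam0 ≤ 1)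
    (h1 : 0 ≤ lam1) (h1' : lam1 ≤ 1) (hls : 1 ≤ lam0 + lam1)
    (hx : 0 < x) (hy : 0 < y) :
    x ^ lam0 * y ^ lam1 ≤ max (max x y) (x * y) := by
  rcases le_or_gt x 1 with hx1 | hx1
  · rcases le_or_gt y 1 with hy1 | hy1
    · set m := max x y with hm
      have hm0 : 0 < m := lt_max_iff.mpr (Or.inl hx)
      have hm1 : m ≤ 1 := max_le hx1 hy1
      have e1 : x ^ lam0 ≤ m ^ lam0 := Real.rpow_le_rpow hx.le (le_max_left _ _) h0
      have e2 : y ^ lam1 ≤ m ^ lam1 := Real.rpow_le_rpow hy.le (le_max_right _ _) h1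
      have e4 : m ^ (lam0 + lam1) ≤ m ^ (1:ℝ) :=
        Real.rpow_le_rpow_of_exponent_ge hm0 hm1 hls
      calc x ^ lam0 * y ^ lam1 ≤ m ^ lam0 * m ^ lam1 :=
            mul_le_mul e1 e2 (Real.rpow_nonneg hy.le _) (Real.rpow_nonneg hm0.le _)
        _ = m ^ (lam0 + lam1) := (Real.rpow_add hm0 _ _).symm
        _ ≤ m := by rwa [Real.rpow_one] at e4
        _ ≤ max (max x y) (x * y) := le_max_left _ _
    · have e1 : x ^ lam0 ≤ 1 := Real.rpow_le_one hx.le hx1 h0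
      have e2 : y ^ lam1 ≤ y := by
        have := Real.rpow_le_rpow_of_exponent_le hy1.le h1'
        rwa [Real.rpow_one] at this
      calc x ^ lam0 * y ^ lam1 ≤ 1 * y :=
            mul_le_mul e1 e2 (Real.rpow_nonneg hy.le _) zero_le_one
        _ = y := one_mul y
        _ ≤ max (max x y) (x * y) := le_trans (le_max_right x y) (le_max_left _ _)
  · have e1 : x ^ lam0 ≤ x := by
      have := Real.rpow_le_rpow_of_exponent_le hx1.le h0'
      rwa [Real.rpow_one] at this
    rcases le_or_gt y 1 with hy1 | hy1
    · have e2 : y ^ lam1 ≤ 1 := Real.rpow_le_one hy.le hy1 h1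
      calc x ^ lam0 * y ^ lam1 ≤ x * 1 :=
            mul_le_mul e1 e2 (Real.rpow_nonneg hy.le _) hx.le
        _ = x := mul_one x
        _ ≤ max (max x y) (x * y) := le_trans (le_max_left x y) (le_max_left _ _)
    · have e2 : y ^ lam1 ≤ y := by
        have := Real.rpow_le_rpow_of_exponent_le hy1.le h1'
        rwa [Real.rpow_one] at this
      calc x ^ lam0 * y ^ lam1 ≤ x * y :=
            mul_le_mul e1 e2 (Real.rpow_nonneg hy.le _) hx.le
        _ ≤ max (max x y) (x * y) := le_max_right _ _

lemma my_sum_biUnion_le {ι α : Type*} [DecidableEq ι] [DecidableEq α] (s : Finset ι) (t : ι → Finset α)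
    (f : α → ℝ) (hf : ∀ x, 0 ≤ f x) :
    ∑ x ∈ s.biUnion t, f x ≤ ∑ i ∈ s, ∑ x ∈ t i, f x := by
  induction s using Finset.induction with
  | empty => simp
  | @insert a s ha ih =>
    rw [Finset.biUnion_insert, Finset.sum_insert ha]
    have h1 : ∑ x ∈ t a ∪ s.biUnion t, f x + ∑ x ∈ t a ∩ s.biUnion t, f x
        = ∑ x ∈ t a, f x + ∑ x ∈ s.biUnion t, f x := Finset.sum_union_inter
    have h2 : 0 ≤ ∑ x ∈ t a ∩ s.biUnion t, f x := Finset.sum_nonneg fun x _ => hf x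
    linarith

lemma per_t {b₀ b₁ : ℕ} {P : Fin b₀ → Fin b₁ → ℝ} (hPpos : ∀ j k, 0 < P j k)
    {lam0 lam1 : ℝ} (h0 : 0 ≤ lam0) (h1 : 0 ≤ lam1)
    (hsub : SubConjugate P lam0 lam1)
    (A : Finset (Fin b₀)) (B : Finset (Fin b₁))
    (hs : 0 < ∑ j ∈ A, ∑ k ∈ B, P j k) :
    ∑ j ∈ A, ∑ k ∈ B, P j k ≤
      (∑ j ∈ A, ∑ k, P j k) ^ lam0 * (∑ k ∈ B, ∑ j, P j k) ^ lam1 := by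
  have hB : B.Nonempty := by
    by_contra h
    rw [Finset.not_nonempty_iff_eq_empty] at h
    simp [h] at hs
  have hA : A.Nonempty := by
    by_contra h
    rw [Finset.not_nonempty_iff_eq_empty] at h
    simp [h] at hs
  set s := ∑ j ∈ A, ∑ k ∈ B, P j k with hsdef
  have hc : ∀ j, 0 < ∑ k ∈ B, P j k := fun j => Finset.sum_pos (fun k _ => hPpos j k) hB
  have hd : ∀ k, 0 < ∑ j ∈ A, P j k := fun k => Finset.sum_pos (fun j _ => hPpos j k) hA
  have hp0 : ∀ j, 0 < ∑ k, P j k :=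
    fun j => Finset.sum_pos (fun k _ => hPpos j k) ⟨hB.choose, Finset.mem_univ _⟩
  have hp1 : ∀ k, 0 < ∑ j, P j k :=
    fun k => Finset.sum_pos (fun j _ => hPpos j k) ⟨hA.choose, Finset.mem_univ _⟩
  have ha : 0 < ∑ j ∈ A, ∑ k, P j k := Finset.sum_pos (fun j _ => hp0 j) hA
  have hb : 0 < ∑ k ∈ B, ∑ j, P j k := Finset.sum_pos (fun k _ => hp1 k) hB
  set a := ∑ j ∈ A, ∑ k, P j k with hadef
  set b := ∑ k ∈ B, ∑ j, P j k with hbdef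
  set Q : Fin b₀ → Fin b₁ → ℝ :=
    fun j k => if j ∈ A ∧ k ∈ B then P j k / s else 0 with hQdef
  have hQ0 : ∀ j k, 0 ≤ Q j k := by
    intro j k
    rw [hQdef]
    dsimp only
    split
    · exact div_nonneg (hPpos j k).le hs.le
    · exact le_refl 0
  have hQrow : ∀ j, (∑ k, Q j k) = if j ∈ A then (∑ k ∈ B, P j k) / s else 0 := by
    intro j
    by_cases hj : j ∈ A
    · simp only [hQdef, hj, true_and, if_true]
      rw [Finset.sum_ite_mem, Finset.univ_inter, Finset.sum_div]
    · simp [hQdef, hj]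
  have hQcol : ∀ k, (∑ j, Q j k) = if k ∈ B then (∑ j ∈ A, P j k) / s else 0 := by
    intro k
    by_cases hk : k ∈ B
    · simp only [hQdef, hk, and_true, if_true]
      rw [Finset.sum_ite_mem, Finset.univ_inter, Finset.sum_div]
    · simp [hQdef, hk]
  have hQsum : ∑ j, ∑ k, Q j k = 1 := by
    rw [Finset.sum_congr rfl fun j _ => hQrow j, Finset.sum_ite_mem, Finset.univ_inter,
      ← Finset.sum_div, div_self hs.ne']
  have hjoint : ∑ j, ∑ k, Q j k * Real.log (Q j k / P j k) = -Real.log s := by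
    have hterm : ∀ j k, Q j k * Real.log (Q j k / P j k)
        = if j ∈ A ∧ k ∈ B then (P j k / s) * (-Real.log s) else 0 := by
      intro j k
      by_cases h : j ∈ A ∧ k ∈ B
      · simp only [hQdef, if_pos h]
        congr 1
        rw [div_right_comm, div_self (hPpos j k).ne', one_div, Real.log_inv]
      · simp [hQdef, h]
    have hin : ∀ j, ∑ k, (if j ∈ A ∧ k ∈ B then (P j k / s) * (-Real.log s) else 0)
        = if j ∈ A then ∑ k ∈ B, (P j k / s) * (-Real.log s) else 0 := by
      intro j
      by_cases hj : j ∈ A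
      · simp only [hj, true_and, if_true]
        rw [Finset.sum_ite_mem, Finset.univ_inter]
      · simp [hj]
    calc ∑ j, ∑ k, Q j k * Real.log (Q j k / P j k)
        = ∑ j, ∑ k, (if j ∈ A ∧ k ∈ B then (P j k / s) * (-Real.log s) else 0) :=
          Finset.sum_congr rfl fun j _ => Finset.sum_congr rfl fun k _ => hterm j k
      _ = ∑ j ∈ A, ∑ k ∈ B, (P j k / s) * (-Real.log s) := by
          rw [Finset.sum_congr rfl fun j _ => hin j, Finset.sum_ite_mem, Finset.univ_inter]
      _ = (∑ j ∈ A, ∑ k ∈ B, P j k / s) * (-Real.log s) := by simp_rw [Finset.sum_mul]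
      _ = (s / s) * (-Real.log s) := by simp_rw [← Finset.sum_div]; rfl
      _ = -Real.log s := by rw [div_self hs.ne', one_mul]
  have hrow : -Real.log a ≤ ∑ j, (∑ k, Q j k) * Real.log ((∑ k, Q j k) / (∑ k, P j k)) := by
    have e1 : ∑ j, (∑ k, Q j k) * Real.log ((∑ k, Q j k) / (∑ k, P j k))
        = ∑ j ∈ A, ((∑ k ∈ B, P j k) / s) *
            Real.log (((∑ k ∈ B, P j k) / s) / (∑ k, P j k)) := by
      have e0 : ∀ j, (∑ k, Q j k) * Real.log ((∑ k, Q j k) / (∑ k, P j k))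
          = if j ∈ A then ((∑ k ∈ B, P j k) / s) *
              Real.log (((∑ k ∈ B, P j k) / s) / (∑ k, P j k)) else 0 := by
        intro j
        rw [hQrow j]
        by_cases hj : j ∈ A <;> simp [hj]
      rw [Finset.sum_congr rfl fun j _ => e0 j, Finset.sum_ite_mem, Finset.univ_inter]
    rw [e1]
    have e2 : ∀ j ∈ A,
        ((∑ k ∈ B, P j k) / s - (∑ k, P j k) / a) - ((∑ k ∈ B, P j k) / s) * Real.log a
        ≤ ((∑ k ∈ B, P j k) / s) * Real.log (((∑ k ∈ B, P j k) / s) / (∑ k, P j k)) := by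
      intro j _
      have hq : 0 < (∑ k ∈ B, P j k) / s := div_pos (hc j) hs
      have hr : 0 < (∑ k, P j k) / a := div_pos (hp0 j) ha
      have l1 := aux_log _ _ hq.le hr
      have l2 : ((∑ k ∈ B, P j k) / s) / ((∑ k, P j k) / a)
          = (((∑ k ∈ B, P j k) / s) / (∑ k, P j k)) * a := by
        field_simp
      have l3 : Real.log ((((∑ k ∈ B, P j k) / s) / (∑ k, P j k)) * a)
          = Real.log (((∑ k ∈ B, P j k) / s) / (∑ k, P j k)) + Real.log a :=
        Real.log_mul (div_pos hq (hp0 j)).ne' ha.ne'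
      rw [l2, l3, mul_add] at l1
      linarith
    have e3 := Finset.sum_le_sum e2
    have e4 : ∑ j ∈ A, (((∑ k ∈ B, P j k) / s - (∑ k, P j k) / a)
        - ((∑ k ∈ B, P j k) / s) * Real.log a) = -Real.log a := by
      rw [Finset.sum_sub_distrib, Finset.sum_sub_distrib, ← Finset.sum_mul,
        ← Finset.sum_div, ← Finset.sum_div, div_self hs.ne', div_self ha.ne']
      ring
    linarith
  have hcol : -Real.log b ≤ ∑ k, (∑ j, Q j k) * Real.log ((∑ j, Q j k) / (∑ j, P j k)) := by
    have e1 : ∑ k, (∑ j, Q j k) * Real.log ((∑ j, Q j k) / (∑ j, P j k))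
        = ∑ k ∈ B, ((∑ j ∈ A, P j k) / s) *
            Real.log (((∑ j ∈ A, P j k) / s) / (∑ j, P j k)) := by
      have e0 : ∀ k, (∑ j, Q j k) * Real.log ((∑ j, Q j k) / (∑ j, P j k))
          = if k ∈ B then ((∑ j ∈ A, P j k) / s) *
              Real.log (((∑ j ∈ A, P j k) / s) / (∑ j, P j k)) else 0 := by
        intro k
        rw [hQcol k]
        by_cases hk : k ∈ B <;> simp [hk]
      rw [Finset.sum_congr rfl fun k _ => e0 k, Finset.sum_ite_mem, Finset.univ_inter]
    rw [e1]
    have hscomm : ∑ k ∈ B, ∑ j ∈ A, P j k = s := by rw [hsdef]; exact Finset.sum_comm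
    have e2 : ∀ k ∈ B,
        ((∑ j ∈ A, P j k) / s - (∑ j, P j k) / b) - ((∑ j ∈ A, P j k) / s) * Real.log b
        ≤ ((∑ j ∈ A, P j k) / s) * Real.log (((∑ j ∈ A, P j k) / s) / (∑ j, P j k)) := by
      intro k _
      have hq : 0 < (∑ j ∈ A, P j k) / s := div_pos (hd k) hs
      have hr : 0 < (∑ j, P j k) / b := div_pos (hp1 k) hb
      have l1 := aux_log _ _ hq.le hr
      have l2 : ((∑ j ∈ A, P j k) / s) / ((∑ j, P j k) / b)
          = (((∑ j ∈ A, P j k) / s) / (∑ j, P j k)) * b := by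
        field_simp
      have l3 : Real.log ((((∑ j ∈ A, P j k) / s) / (∑ j, P j k)) * b)
          = Real.log (((∑ j ∈ A, P j k) / s) / (∑ j, P j k)) + Real.log b :=
        Real.log_mul (div_pos hq (hp1 k)).ne' hb.ne'
      rw [l2, l3, mul_add] at l1
      linarith
    have e3 := Finset.sum_le_sum e2
    have e4 : ∑ k ∈ B, (((∑ j ∈ A, P j k) / s - (∑ j, P j k) / b)
        - ((∑ j ∈ A, P j k) / s) * Real.log b) = -Real.log b := by
      rw [Finset.sum_sub_distrib, Finset.sum_sub_distrib, ← Finset.sum_mul,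
        ← Finset.sum_div, ← Finset.sum_div, hscomm, div_self hs.ne', div_self hb.ne']
      ring
    linarith
  have hKL := hsub Q hQ0 hQsum
  rw [hjoint] at hKL
  have h5 : lam0 * (-Real.log a) + lam1 * (-Real.log b) ≤ -Real.log s := by
    have m0 := mul_le_mul_of_nonneg_left hrow h0
    have m1 := mul_le_mul_of_nonneg_left hcol h1
    linarith
  have h6 : Real.log s ≤ lam0 * Real.log a + lam1 * Real.log b := by linarith
  calc s = Real.exp (Real.log s) := (Real.exp_log hs).symm
    _ ≤ Real.exp (lam0 * Real.log a + lam1 * Real.log b) := Real.exp_le_exp.mpr h6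
    _ = a ^ lam0 * b ^ lam1 := by
        rw [Real.exp_add]
        congr 1 <;> rw [Real.rpow_def_of_pos (by assumption), mul_comm]

/-- Lower bound on the work of any bucketing code: if `λ₀, λ₁ ≤ 1 ≤ λ₀+λ₁` are
`P`-sub-conjugate, then `W ≥ S n₀^{λ₀} n₁^{λ₁}`, where `S` is the success
probability and `W` the work of the code. -/
theorem bucketing_work_lower_bound (b₀ b₁ T : ℕ) (P : Fin b₀ → Fin b₁ → ℝ)
    (hPpos : ∀ j k, 0 < P j k) (hPsum : ∑ j, ∑ k, P j k = 1)
    (lam0 lam1 : ℝ) (hl0 : lam0 ≤ 1) (hl1 : lam1 ≤ 1) (hls : 1 ≤ lam0 + lam1)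
    (hsub : SubConjugate P lam0 lam1)
    (B₀ : Fin T → Finset (Fin b₀)) (B₁ : Fin T → Finset (Fin b₁))
    (n₀ n₁ : ℝ) (hn₀ : 0 < n₀) (hn₁ : 0 < n₁)
    (S W : ℝ)
    (hS : S = ∑ jk ∈ Finset.univ.filter
        (fun jk : Fin b₀ × Fin b₁ => ∃ t, jk.1 ∈ B₀ t ∧ jk.2 ∈ B₁ t),
      P jk.1 jk.2)
    (hW : W = ∑ t, max (max (n₀ * ∑ j ∈ B₀ t, ∑ k, P j k)
        (n₁ * ∑ k ∈ B₁ t, ∑ j, P j k))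
      ((n₀ * ∑ j ∈ B₀ t, ∑ k, P j k) * (n₁ * ∑ k ∈ B₁ t, ∑ j, P j k))) :
    S * n₀ ^ lam0 * n₁ ^ lam1 ≤ W := by
  have h0 : 0 ≤ lam0 := by linarith
  have h1 : 0 ≤ lam1 := by linarith
  have hC : 0 ≤ n₀ ^ lam0 * n₁ ^ lam1 :=
    mul_nonneg (Real.rpow_nonneg hn₀.le _) (Real.rpow_nonneg hn₁.le _)
  have hSle : S ≤ ∑ t, ∑ j ∈ B₀ t, ∑ k ∈ B₁ t, P j k := by
    rw [hS]
    have hsub1 : (Finset.univ.filter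
          fun jk : Fin b₀ × Fin b₁ => ∃ t, jk.1 ∈ B₀ t ∧ jk.2 ∈ B₁ t)
        ⊆ Finset.univ.biUnion (fun t => B₀ t ×ˢ B₁ t) := by
      intro jk hjk
      simp only [Finset.mem_filter, Finset.mem_biUnion, Finset.mem_product,
        Finset.mem_univ, true_and] at hjk ⊢
      obtain ⟨t, ht⟩ := hjk
      exact ⟨t, ht⟩
    calc (∑ jk ∈ Finset.univ.filter
          (fun jk : Fin b₀ × Fin b₁ => ∃ t, jk.1 ∈ B₀ t ∧ jk.2 ∈ B₁ t), P jk.1 jk.2)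
        ≤ ∑ jk ∈ Finset.univ.biUnion (fun t => B₀ t ×ˢ B₁ t), P jk.1 jk.2 :=
          Finset.sum_le_sum_of_subset_of_nonneg hsub1 (fun i _ _ => (hPpos i.1 i.2).le)
      _ ≤ ∑ t, ∑ jk ∈ B₀ t ×ˢ B₁ t, P jk.1 jk.2 :=
          my_sum_biUnion_le _ _ _ (fun i => (hPpos i.1 i.2).le)
      _ = ∑ t, ∑ j ∈ B₀ t, ∑ k ∈ B₁ t, P j k :=
          Finset.sum_congr rfl fun t _ => by rw [Finset.sum_product]
  have hBd : ∀ t : Fin T,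
      (∑ j ∈ B₀ t, ∑ k ∈ B₁ t, P j k) * (n₀ ^ lam0 * n₁ ^ lam1)
      ≤ max (max (n₀ * ∑ j ∈ B₀ t, ∑ k, P j k) (n₁ * ∑ k ∈ B₁ t, ∑ j, P j k))
          ((n₀ * ∑ j ∈ B₀ t, ∑ k, P j k) * (n₁ * ∑ k ∈ B₁ t, ∑ j, P j k)) := by
    intro t
    have hs0 : 0 ≤ ∑ j ∈ B₀ t, ∑ k ∈ B₁ t, P j k :=
      Finset.sum_nonneg fun j _ => Finset.sum_nonneg fun k _ => (hPpos j k).le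
    have ha0 : 0 ≤ n₀ * ∑ j ∈ B₀ t, ∑ k, P j k :=
      mul_nonneg hn₀.le (Finset.sum_nonneg fun j _ =>
        Finset.sum_nonneg fun k _ => (hPpos j k).le)
    rcases eq_or_lt_of_le hs0 with h | h
    · rw [← h, zero_mul]
      exact le_trans ha0 (le_trans (le_max_left _ _) (le_max_left _ _))
    · have key := per_t hPpos h0 h1 hsub (B₀ t) (B₁ t) h
      have ha : 0 < ∑ j ∈ B₀ t, ∑ k, P j k :=
        lt_of_lt_of_le h (Finset.sum_le_sum fun j _ =>
          Finset.sum_le_sum_of_subset_of_nonneg (Finset.subset_univ _)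
            fun k _ _ => (hPpos j k).le)
      have h' : 0 < ∑ k ∈ B₁ t, ∑ j ∈ B₀ t, P j k := by
        rw [Finset.sum_comm]; exact h
      have hb : 0 < ∑ k ∈ B₁ t, ∑ j, P j k :=
        lt_of_lt_of_le h' (Finset.sum_le_sum fun k _ =>
          Finset.sum_le_sum_of_subset_of_nonneg (Finset.subset_univ _)
            fun j _ _ => (hPpos j k).le)
      have hmax := aux_max h0 hl0 h1 hl1 hls (mul_pos hn₀ ha) (mul_pos hn₁ hb)
      calc (∑ j ∈ B₀ t, ∑ k ∈ B₁ t, P j k) * (n₀ ^ lam0 * n₁ ^ lam1)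
          ≤ ((∑ j ∈ B₀ t, ∑ k, P j k) ^ lam0 * (∑ k ∈ B₁ t, ∑ j, P j k) ^ lam1)
              * (n₀ ^ lam0 * n₁ ^ lam1) := mul_le_mul_of_nonneg_right key hC
        _ = (n₀ * ∑ j ∈ B₀ t, ∑ k, P j k) ^ lam0
              * (n₁ * ∑ k ∈ B₁ t, ∑ j, P j k) ^ lam1 := by
            rw [Real.mul_rpow hn₀.le ha.le, Real.mul_rpow hn₁.le hb.le]; ring
        _ ≤ _ := hmax
  calc S * n₀ ^ lam0 * n₁ ^ lam1 = S * (n₀ ^ lam0 * n₁ ^ lam1) := by ring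
    _ ≤ (∑ t, ∑ j ∈ B₀ t, ∑ k ∈ B₁ t, P j k) * (n₀ ^ lam0 * n₁ ^ lam1) :=
        mul_le_mul_of_nonneg_right hSle hC
    _ = ∑ t, (∑ j ∈ B₀ t, ∑ k ∈ B₁ t, P j k) * (n₀ ^ lam0 * n₁ ^ lam1) := by
        rw [Finset.sum_mul]
    _ ≤ ∑ t, max (max (n₀ * ∑ j ∈ B₀ t, ∑ k, P j k) (n₁ * ∑ k ∈ B₁ t, ∑ j, P j k))
          ((n₀ * ∑ j ∈ B₀ t, ∑ k, P j k) * (n₁ * ∑ k ∈ B₁ t, ∑ j, P j k)) :=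
        Finset.sum_le_sum fun t _ => hBd t
    _ = W := hW.symm
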